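/- arXiv:1409.5056 — 6 statements merged into one kernel-verified Lean document; each statement's English description precedes it below -/
import Mathlib

section
/- Let A = {10ⁿ + i² : n, i ∈ ℕ, 1 ≤ i ≤ n} ⊆ ℤ and let β : ℤ → {0,1} be the indicator function of A. Then P_β(k) ≤ (k+1)³ for every positive integer k. -/
open Filter Set

noncomputable section

/-- The plane `ℝ²`. -/
abbrev R2 := EuclideanSpace ℝ (Fin 2)

/-- The embedding of `ℤ²` into `ℝ²`. -/
def toR2 (p : ℤ × ℤ) : R2 := (WithLp.equiv 2 (Fin 2 → ℝ)).symm ![(p.1 : ℝ), (p.2 : ℝ)]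

def e1 : R2 := (WithLp.equiv 2 (Fin 2 → ℝ)).symm ![1, 0]
def e2 : R2 := (WithLp.equiv 2 (Fin 2 → ℝ)).symm ![0, 1]

variable {A : Type*}

/-- The translate `Tⁿη`. -/
def Tr (η : ℤ × ℤ → A) (n : ℤ × ℤ) : ℤ × ℤ → A := fun x => η (x + n)

/-- The number of distinct `η`-colorings of a set `S ⊆ ℤ²`. -/
def colorCount (η : ℤ × ℤ → A) (S : Set (ℤ × ℤ)) : ℕ :=
  Set.ncard {f : S → A | ∃ n : ℤ × ℤ, ∀ x : S, f x = η ((x : ℤ × ℤ) + n)}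

/-- The integer points of a subset of the plane. -/
def latticePts (K : Set R2) : Set (ℤ × ℤ) := {p | toR2 p ∈ K}

/-- The complexity `P_η(K)` for `K ⊆ ℝ²`. -/
def Pc (η : ℤ × ℤ → A) (K : Set R2) : ℕ := colorCount η (latticePts K)

/-- The rectangle complexity `P_η(n,k)`. -/
def Prect (η : ℤ × ℤ → A) (n k : ℕ) : ℕ :=
  colorCount η {p : ℤ × ℤ | 0 ≤ p.1 ∧ p.1 < (n : ℤ) ∧ 0 ≤ p.2 ∧ p.2 < (k : ℤ)}

/-- The `t`-neighborhood `[0, su]^(t)` of the segment `[0, su]`. -/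
def segNbhd (u : R2) (s t : ℝ) : Set R2 :=
  {v | ∃ w ∈ segment ℝ (0 : R2) (s • u), dist v w < t}

/-- The directional entropy `h(u)`. -/
def dirEnt (η : ℤ × ℤ → A) (u : R2) : EReal :=
  ⨆ t : Set.Ioi (0 : ℝ),
    Filter.limsup (fun s : ℝ => ((Real.log (Pc η (segNbhd u s (t : ℝ))) / s : ℝ) : EReal))
      Filter.atTop

/-- `f` agrees on `S` with some translate of `η`. -/
def IsColoring (η : ℤ × ℤ → A) (S : Set (ℤ × ℤ)) (f : ℤ × ℤ → A) : Prop :=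
  ∃ n : ℤ × ℤ, ∀ x ∈ S, f x = η (x + n)

/-- The `η`-coloring `f` of `S` extends uniquely to an `η`-coloring of `T`. -/
def ExtendsUniquely (η : ℤ × ℤ → A) (S T : Set (ℤ × ℤ)) (f : ℤ × ℤ → A) : Prop :=
  (∃ g, IsColoring η T g ∧ ∀ x ∈ S, g x = f x) ∧
    ∀ g g', IsColoring η T g → IsColoring η T g' →
      (∀ x ∈ S, g x = f x) → (∀ x ∈ S, g' x = f x) → ∀ x ∈ T, g x = g' x

/-- `S = conv(S) ∩ ℤ²`. -/
def IsLatticeConvex (S : Set (ℤ × ℤ)) : Prop :=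
  ∀ p : ℤ × ℤ, toR2 p ∈ convexHull ℝ (toR2 '' S) → p ∈ S

/-- `x` is `η`-generated by `S`. -/
def IsGenerated (η : ℤ × ℤ → A) (S : Set (ℤ × ℤ)) (x : ℤ × ℤ) : Prop :=
  ∀ f : ℤ × ℤ → A, IsColoring η (S \ {x}) f → ExtendsUniquely η (S \ {x}) S f

/-- `S` is an `η`-generating set. -/
def IsGeneratingSet (η : ℤ × ℤ → A) (S : Set (ℤ × ℤ)) : Prop :=
  S.Finite ∧ S.Nonempty ∧ IsLatticeConvex S ∧
    ∀ x ∈ S, toR2 x ∈ frontier (convexHull ℝ (toR2 '' S)) → IsGenerated η S x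

/-- For `v = (v₁, v₂)`, `perp v = (v₂, -v₁)`. -/
def perp (v : R2) : R2 := (WithLp.equiv 2 (Fin 2 → ℝ)).symm ![v 1, -(v 0)]

/-- `E_v(S)`: the integer points of the edge of `S` in direction `v`. -/
def edgeSet (v : R2) (S : Set (ℤ × ℤ)) : Set (ℤ × ℤ) :=
  {x ∈ S | ∀ y ∈ S, (inner ℝ (toR2 y) (perp v) : ℝ) ≤ inner ℝ (toR2 x) (perp v)}

/-- `x` is an endpoint of `E_v(S)`. -/
def IsEndpoint (v : R2) (S : Set (ℤ × ℤ)) (x : ℤ × ℤ) : Prop :=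
  x ∈ edgeSet v S ∧ toR2 x ∉ convexHull ℝ (toR2 '' (edgeSet v S \ {x}))

/-- `S` is `v`-balanced for `η`. -/
def IsBalanced (η : ℤ × ℤ → A) (v : R2) (S : Set (ℤ × ℤ)) : Prop :=
  S.Finite ∧ IsLatticeConvex S ∧ S ≠ edgeSet v S ∧
    (∀ x, IsEndpoint v S x → IsGenerated η S x) ∧
    colorCount η S < colorCount η (S \ edgeSet v S) + (edgeSet v S).ncard ∧
    ∀ w : R2, ({x ∈ S | ∃ c : ℝ, toR2 x = w + c • v}).Nonempty →
      (edgeSet v S).ncard ≤ ({x ∈ S | ∃ c : ℝ, toR2 x = w + c • v}).ncard + 1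

/-- `J_{T,v,S}`. -/
def Jset (v : R2) (S T : Set (ℤ × ℤ)) : Set (ℤ × ℤ) :=
  {j | ((fun x => x + j) '' S) \ T = (fun x => x + j) '' edgeSet v S}

/-- `J_{T,v,S,p}`: `J_{T,v,S}` with the `p` points nearest each endpoint removed. -/
def JsetP (v : R2) (S T : Set (ℤ × ℤ)) (p : ℕ) : Set (ℤ × ℤ) :=
  {j ∈ Jset v S T |
    p ≤ ({j' ∈ Jset v S T | (inner ℝ (toR2 j') v : ℝ) < inner ℝ (toR2 j) v}).ncard ∧
    p ≤ ({j' ∈ Jset v S T | (inner ℝ (toR2 j) v : ℝ) < inner ℝ (toR2 j') v}).ncard}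

/-- `ext¹_{v,S,p}(T)`. -/
def ext1 (v : R2) (S : Set (ℤ × ℤ)) (p : ℕ) (T : Set (ℤ × ℤ)) : Set (ℤ × ℤ) :=
  T ∪ ⋃ j ∈ JsetP v S T p, (fun x => x + j) '' S

/-- `ext^m_{v,S,p}(T)`. -/
def extN (v : R2) (S : Set (ℤ × ℤ)) (p : ℕ) (m : ℕ) (T : Set (ℤ × ℤ)) : Set (ℤ × ℤ) :=
  (ext1 v S p)^[m] T

/-- The border `∂_{v,S,p}(T)`. -/
def border (v : R2) (S : Set (ℤ × ℤ)) (p : ℕ) (T : Set (ℤ × ℤ)) : Set (ℤ × ℤ) :=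
  ⋃ j ∈ JsetP v S T p, (fun x => x + j) '' (S \ edgeSet v S)

/-- The integer points of the rectangle `[a,b] × [c,d]`. -/
def rect (a b c d : ℤ) : Set (ℤ × ℤ) := {p | a ≤ p.1 ∧ p.1 ≤ b ∧ c ≤ p.2 ∧ p.2 ≤ d}

/-- `f` is (the restriction to `T` of) an `(S,η)`-coloring. -/
def IsSColoringOf (η : ℤ × ℤ → A) (S T : Set (ℤ × ℤ)) (f : ℤ × ℤ → A) : Prop :=
  ∃ g : ℤ × ℤ → A, (∀ x ∈ T, g x = f x) ∧ ∀ j : ℤ × ℤ, IsColoring η ((fun x => x + j) '' S) g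

/-- `f|_R` extends uniquely to an `(S,η)`-coloring of `T`. -/
def ExtendsUniquelyS (η : ℤ × ℤ → A) (S R T : Set (ℤ × ℤ)) (f : ℤ × ℤ → A) : Prop :=
  (∃ g, IsSColoringOf η S T g ∧ ∀ x ∈ R, g x = f x) ∧
    ∀ g g', IsSColoringOf η S T g → IsSColoringOf η S T g' →
      (∀ x ∈ R, g x = f x) → (∀ x ∈ R, g' x = f x) → ∀ x ∈ T, g x = g' x

/-- `f` is vertically periodic on `X` with period `p`. -/
def VertPeriodicOn (f : ℤ × ℤ → A) (X : Set (ℤ × ℤ)) (p : ℤ) : Prop :=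
  ∀ q : ℤ × ℤ, q ∈ X → q + (0, p) ∈ X → f (q + (0, p)) = f q

/-- The thickness `τ_u(K)` of `K` in direction `u`. -/
def thickness (u : R2) (K : Set R2) : ℝ :=
  sSup {τ : ℝ | 0 ≤ τ ∧ ∃ n : ℤ × ℤ, (fun v => v + toR2 n) '' segment ℝ (0 : R2) (τ • u) ⊆ K}

/-- One-dimensional word complexity `P_α(n)`. -/
def wordCount (α : ℤ → A) (n : ℕ) : ℕ :=
  Set.ncard {w : Fin n → A | ∃ m : ℤ, ∀ j : Fin n, w j = α (m + (j : ℕ))}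

section Topological

variable [TopologicalSpace A]

/-- The orbit closure `X_η` in the product topology. -/
def Xeta (η : ℤ × ℤ → A) : Set (ℤ × ℤ → A) := closure {g | ∃ n : ℤ × ℤ, g = Tr η n}

/-- A line `ℓ ⊆ ℝ²` is expansive for `X_η`. -/
def IsExpansiveLine (η : ℤ × ℤ → A) (ℓ : Set R2) : Prop :=
  ∃ r > 0, ∀ x ∈ Xeta η, ∀ y ∈ Xeta η,
    (∀ n : ℤ × ℤ, Metric.infDist (toR2 n) ℓ < r → x n = y n) → x = y

/-- The line through the origin in direction `u`. -/
def lineThrough (u : R2) : Set R2 := {v | ∃ c : ℝ, v = c • u}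

open Classical in
/-- The metric `ρ` on `𝒜^{ℤ²}`. -/
def rho (x y : ℤ × ℤ → A) : ℝ :=
  if x = y then 0
  else (2 : ℝ) ^ (-(sInf {r : ℝ | ∃ m : ℤ × ℤ, x m ≠ y m ∧ ‖toR2 m‖ = r}))

/-- The covering number `N_T(E, ε)`. -/
def Ncount (η : ℤ × ℤ → A) (E : Set R2) (ε : ℝ) : ℕ :=
  sInf {c : ℕ | ∃ Y : Finset (ℤ × ℤ → A), Y.card = c ∧ ↑Y ⊆ Xeta η ∧
    ∀ x ∈ Xeta η, ∃ y ∈ Y, ∀ n : ℤ × ℤ, toR2 n ∈ E → rho (Tr x n) (Tr y n) < ε}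

end Topological

end


/-- The set `A = {10ⁿ + i² : n, i ∈ ℕ, 1 ≤ i ≤ n}`. -/
def Aset : Set ℤ := {x | ∃ nn ii : ℕ, 1 ≤ ii ∧ ii ≤ nn ∧ x = 10 ^ nn + (ii : ℤ) ^ 2}
lemma nat_sq_le_pow (n : ℕ) : n ^ 2 ≤ 10 ^ n := by
  induction n with
  | zero => norm_num
  | succ n ih =>
    have h1 : n < 2 ^ n := Nat.lt_two_pow_self (n := n)
    have h2 : 2 ^ n ≤ 10 ^ n := Nat.pow_le_pow_left (by norm_num) n
    have h3 : 10 ^ (n + 1) = 10 * 10 ^ n := by ring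
    nlinarith

lemma int_sq_le (n : ℕ) : ((n : ℤ)) ^ 2 ≤ 10 ^ n := by exact_mod_cast nat_sq_le_pow n

lemma int_le_pow (n : ℕ) : (n : ℤ) ≤ 10 ^ n := by
  have := (Nat.lt_two_pow_self (n := n)).le.trans (Nat.pow_le_pow_left (by norm_num : 2 ≤ 10) n)
  exact_mod_cast this

lemma int_pow_mono {a b : ℕ} (h : a ≤ b) : (10 : ℤ) ^ a ≤ 10 ^ b :=
  pow_le_pow_right₀ (by norm_num) h

lemma int_one_le_pow (n : ℕ) : (1 : ℤ) ≤ 10 ^ n := one_le_pow₀ (by norm_num)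

lemma keyL1 (k n i : ℕ) (j p : ℤ) (hi1 : 1 ≤ i) (hin : i ≤ n)
    (hj0 : 0 ≤ j) (hjk : j < (k : ℤ)) (hp0 : 0 ≤ p) (hpk : p < (k : ℤ))
    (hak : (k : ℤ) ≤ 10 ^ n + (i : ℤ) ^ 2)
    (hH1 : ∀ j' : ℕ, 1 ≤ j' → j' < i → j < (i : ℤ) ^ 2 - (j' : ℤ) ^ 2)
    (hH2 : ∀ ν μ : ℕ, 1 ≤ μ → μ ≤ ν → ν < n →
      (10 : ℤ) ^ ν + (μ : ℤ) ^ 2 < 10 ^ n + (i : ℤ) ^ 2 - j) :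
    ((10 : ℤ) ^ n + (i : ℤ) ^ 2 - j + p ∈ Aset) ↔
      ∃ j' : ℕ, i ≤ j' ∧ j' ≤ n ∧ ((j' : ℤ) ^ 2 - (i : ℤ) ^ 2 = p - j) := by
  constructor
  · rintro ⟨ν, μ, hμ1, hμν, hx⟩
    rcases lt_trichotomy ν n with h | h | h
    · exact absurd hx (by have := hH2 ν μ hμ1 hμν h; intro hx; linarith)
    · subst h
      have hμi : i ≤ μ := by
        by_contra hc
        push_neg at hc
        have := hH1 μ hμ1 hc
        linarith
      exact ⟨μ, hμi, hμν, by linarith⟩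
    · exfalso
      have h1 : (10 : ℤ) ^ (n + 1) ≤ 10 ^ ν := int_pow_mono h
      have h2 : (10 : ℤ) ^ (n + 1) = 10 * 10 ^ n := by ring
      have h3 : (1 : ℤ) ≤ (μ : ℤ) ^ 2 := by
        have : (1 : ℤ) ≤ (μ : ℤ) := by exact_mod_cast hμ1
        nlinarith
      have h4 : (i : ℤ) ^ 2 ≤ (n : ℤ) ^ 2 := by
        have h5 : (i : ℤ) ≤ n := by exact_mod_cast hin
        have h6 : (0 : ℤ) ≤ i := Int.natCast_nonneg i
        nlinarith
      have h7 := int_sq_le n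
      have h8 := int_one_le_pow n
      linarith
  · rintro ⟨j', h1, h2, h3⟩
    exact ⟨n, j', hi1.trans h1, h2, by linarith⟩

noncomputable def Mrep (k : ℕ) : Finset ℤ :=
  (Finset.Ioo (-(k : ℤ)) (k : ℤ) ∪ {(10 : ℤ) ^ k + (k : ℤ) ^ 2 + 1}) ∪
    ((Finset.Icc 1 k ×ˢ Finset.Icc 0 k ×ˢ Finset.Ico 0 k).image
      fun t => (10 : ℤ) ^ (t.1 + t.2.1) + (t.1 : ℤ) ^ 2 - (t.2.2 : ℤ))

lemma mem_Mrep_image {k : ℕ} (i d j : ℕ) (h1 : 1 ≤ i) (h2 : i ≤ k) (h3 : d ≤ k) (h4 : j < k) :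
    (10 : ℤ) ^ (i + d) + (i : ℤ) ^ 2 - (j : ℤ) ∈ Mrep k := by
  apply Finset.mem_union_right
  apply Finset.mem_image.mpr
  refine ⟨(i, d, j), ?_, rfl⟩
  simp only [Finset.mem_product, Finset.mem_Icc, Finset.mem_Ico]
  omega

lemma mem_Mrep_Ioo {k : ℕ} (m : ℤ) (h1 : -(k : ℤ) < m) (h2 : m < k) : m ∈ Mrep k := by
  apply Finset.mem_union_left
  exact Finset.mem_union_left _ (Finset.mem_Ioo.mpr ⟨h1, h2⟩)

lemma mem_Mrep_sing {k : ℕ} : (10 : ℤ) ^ k + (k : ℤ) ^ 2 + 1 ∈ Mrep k :=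
  Finset.mem_union_left _ (Finset.mem_union_right _ (Finset.mem_singleton_self _))

lemma Mrep_card (k : ℕ) (hk : 0 < k) : (Mrep k).card ≤ (k + 1) ^ 3 := by
  have h1 : (Finset.Ioo (-(k : ℤ)) (k : ℤ)).card = 2 * k - 1 := by
    rw [Int.card_Ioo]; omega
  have h2 : ((Finset.Icc 1 k ×ˢ Finset.Icc 0 k ×ˢ Finset.Ico 0 k : Finset (ℕ × ℕ × ℕ))).card
      = k * ((k + 1) * k) := by
    simp [Finset.card_product, Nat.card_Icc, Nat.card_Ico]
  calc (Mrep k).card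
      ≤ (Finset.Ioo (-(k : ℤ)) (k : ℤ) ∪ {(10 : ℤ) ^ k + (k : ℤ) ^ 2 + 1}).card
        + ((Finset.Icc 1 k ×ˢ Finset.Icc 0 k ×ˢ Finset.Ico 0 k).image
          fun t : ℕ × ℕ × ℕ => (10 : ℤ) ^ (t.1 + t.2.1) + (t.1 : ℤ) ^ 2 - (t.2.2 : ℤ)).card :=
        Finset.card_union_le _ _
    _ ≤ ((Finset.Ioo (-(k : ℤ)) (k : ℤ)).card + 1) + k * ((k + 1) * k) := by
        gcongr
        · exact le_trans (Finset.card_union_le _ _) (by simp)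
        · exact le_trans (Finset.card_image_le) (le_of_eq h2)
    _ ≤ (k + 1) ^ 3 := by
        rw [h1]
        have h3 : (k + 1) ^ 3 = k * ((k + 1) * k) + (2 * k * k + 3 * k + 1) := by ring
        omega

set_option maxHeartbeats 1600000 in
lemma keyRep (k : ℕ) (hk : 0 < k) (m : ℤ) :
    ∃ m' ∈ Mrep k, ∀ p : ℤ, 0 ≤ p → p < (k : ℤ) → ((m + p ∈ Aset) ↔ (m' + p ∈ Aset)) := by
  classical
  by_cases hA : ∃ t : ℕ, (t : ℤ) < k ∧ m + (t : ℤ) ∈ Aset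
  · have hspec := Nat.find_spec hA
    set t₀ := Nat.find hA with ht₀def
    obtain ⟨ht₀k, ht₀A⟩ := hspec
    have ht₀0 : (0 : ℤ) ≤ (t₀ : ℤ) := Int.natCast_nonneg _
    have hmin : ∀ b : ℤ, b ∈ Aset → m ≤ b → b < m + k → m + (t₀ : ℤ) ≤ b := by
      intro b hb hmb hbk
      have hnn : (0 : ℤ) ≤ b - m := by linarith
      have ht : ((b - m).toNat : ℤ) = b - m := Int.toNat_of_nonneg hnn
      have hle : t₀ ≤ (b - m).toNat := by
        apply Nat.find_min' hA
        constructor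
        · rw [ht]; linarith
        · rw [ht]; convert hb using 2; ring
      have : (t₀ : ℤ) ≤ b - m := le_trans (by exact_mod_cast hle) (le_of_eq ht)
      linarith
    clear_value t₀
    clear ht₀def
    obtain ⟨n, i, hi1, hin, ha⟩ := ht₀A
    have hi1' : (1 : ℤ) ≤ (i : ℤ) := by exact_mod_cast hi1
    have hi2' : (1 : ℤ) ≤ (i : ℤ) ^ 2 := by nlinarith
    by_cases hsm : m + (t₀ : ℤ) < k
    · refine ⟨m, ?_, fun p _ _ => Iff.rfl⟩
      apply mem_Mrep_Ioo
      · have := int_one_le_pow n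
        linarith
      · linarith
    · push_neg at hsm
      have hak : (k : ℤ) ≤ 10 ^ n + (i : ℤ) ^ 2 := by rw [← ha]; exact hsm
      have hm : m = 10 ^ n + (i : ℤ) ^ 2 - (t₀ : ℤ) := by linarith
      have hH1 : ∀ j' : ℕ, 1 ≤ j' → j' < i → (t₀ : ℤ) < (i : ℤ) ^ 2 - (j' : ℤ) ^ 2 := by
        intro j' h1 h2
        by_contra hcon
        push_neg at hcon
        have hb : ((10 : ℤ) ^ n + (j' : ℤ) ^ 2) ∈ Aset := ⟨n, j', h1, (le_of_lt h2).trans hin, rfl⟩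
        have hji : (j' : ℤ) ^ 2 < (i : ℤ) ^ 2 := by
          have hc : (j' : ℤ) < i := by exact_mod_cast h2
          have h0 : (0 : ℤ) ≤ j' := Int.natCast_nonneg _
          nlinarith
        have := hmin _ hb (by linarith) (by linarith)
        linarith
      have hH2 : ∀ ν μ : ℕ, 1 ≤ μ → μ ≤ ν → ν < n →
          (10 : ℤ) ^ ν + (μ : ℤ) ^ 2 < 10 ^ n + (i : ℤ) ^ 2 - (t₀ : ℤ) := by
        intro ν μ h1 h2 h3
        have hb : ((10 : ℤ) ^ ν + (μ : ℤ) ^ 2) ∈ Aset := ⟨ν, μ, h1, h2, rfl⟩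
        have hμν : (μ : ℤ) ^ 2 ≤ 10 ^ ν := by
          have hc : (μ : ℤ) ≤ ν := by exact_mod_cast h2
          have h0 : (0 : ℤ) ≤ μ := Int.natCast_nonneg _
          nlinarith [int_sq_le ν]
        have h10ν : (10 : ℤ) ^ (ν + 1) ≤ 10 ^ n := int_pow_mono h3
        have hps : (10 : ℤ) ^ (ν + 1) = 10 * 10 ^ ν := by ring
        have h1ν := int_one_le_pow ν
        have hlt : (10 : ℤ) ^ ν + (μ : ℤ) ^ 2 < 10 ^ n + (i : ℤ) ^ 2 := by linarith
        by_contra hcon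
        push_neg at hcon
        have := hmin _ hb (by linarith) (by linarith)
        linarith
      by_cases hik : i ≤ k
      · by_cases hnik : n ≤ i + k
        · refine ⟨m, ?_, fun p _ _ => Iff.rfl⟩
          have ht₀k' : t₀ < k := by exact_mod_cast ht₀k
          have := mem_Mrep_image i (n - i) t₀ hi1 hik (by omega) ht₀k'
          rwa [show i + (n - i) = n by omega, ← hm] at this
        · push_neg at hnik
          have ht₀k' : t₀ < k := by exact_mod_cast ht₀k
          refine ⟨(10 : ℤ) ^ (i + k) + (i : ℤ) ^ 2 - (t₀ : ℤ),
            mem_Mrep_image i k t₀ hi1 hik le_rfl ht₀k', ?_⟩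
          have hH2' : ∀ ν μ : ℕ, 1 ≤ μ → μ ≤ ν → ν < i + k →
              (10 : ℤ) ^ ν + (μ : ℤ) ^ 2 < 10 ^ (i + k) + (i : ℤ) ^ 2 - (t₀ : ℤ) := by
            intro ν μ h1 h2 h3
            have hμν : (μ : ℤ) ^ 2 ≤ 10 ^ ν := by
              have hc : (μ : ℤ) ≤ ν := by exact_mod_cast h2
              have h0 : (0 : ℤ) ≤ μ := Int.natCast_nonneg _
              nlinarith [int_sq_le ν]
            have hν : ν ≤ i + k - 1 := by omega
            have h3' : (10 : ℤ) ^ ν ≤ 10 ^ (i + k - 1) := int_pow_mono hν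
            have h4 : (10 : ℤ) ^ (i + k) = 10 * 10 ^ (i + k - 1) := by
              obtain ⟨e, he⟩ : ∃ e, e + 1 = i + k := ⟨i + k - 1, by omega⟩
              rw [← he, pow_succ]
              simp only [Nat.add_sub_cancel]
              ring
            have h5 : (t₀ : ℤ) < 10 ^ (i + k - 1) :=
              lt_of_lt_of_le ht₀k ((int_le_pow k).trans (int_pow_mono (by omega)))
            linarith
          have hak' : (k : ℤ) ≤ 10 ^ (i + k) + (i : ℤ) ^ 2 := by
            have := (int_le_pow k).trans (int_pow_mono (by omega : k ≤ i + k))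
            linarith
          intro p hp0 hpk
          rw [hm, show (10 : ℤ) ^ (i + k) + (i : ℤ) ^ 2 - (t₀ : ℤ) + p
              = 10 ^ (i + k) + (i : ℤ) ^ 2 - (t₀ : ℤ) + p from rfl,
            keyL1 k n i (t₀ : ℤ) p hi1 hin ht₀0 ht₀k hp0 hpk hak hH1 hH2,
            keyL1 k (i + k) i (t₀ : ℤ) p hi1 (by omega) ht₀0 ht₀k hp0 hpk hak' hH1 hH2']
          constructor
          · rintro ⟨j', h1, h2, h3⟩
            refine ⟨j', h1, ?_, h3⟩
            have hci : (i : ℤ) ≤ j' := by exact_mod_cast h1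
            have hkey : (0 : ℤ) ≤ ((j' : ℤ) - i) * ((j' : ℤ) + i - 1) :=
              mul_nonneg (by linarith) (by linarith)
            have : (j' : ℤ) ≤ i + k := by nlinarith
            exact_mod_cast this
          · rintro ⟨j', h1, h2, h3⟩
            exact ⟨j', h1, by omega, h3⟩
      · push_neg at hik
        have ht₀k' : t₀ < k := by exact_mod_cast ht₀k
        have hk1 : (1 : ℤ) ≤ (k : ℤ) := by exact_mod_cast hk
        refine ⟨(10 : ℤ) ^ k + (k : ℤ) ^ 2 - (t₀ : ℤ), ?_, ?_⟩
        · have := mem_Mrep_image k 0 t₀ hk le_rfl (by omega) ht₀k'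
          rwa [show k + 0 = k by omega] at this
        · have hH1' : ∀ j' : ℕ, 1 ≤ j' → j' < k → (t₀ : ℤ) < (k : ℤ) ^ 2 - (j' : ℤ) ^ 2 := by
            intro j' h1 h2
            have hc : (j' : ℤ) < (k : ℤ) := by exact_mod_cast h2
            have h0 : (0 : ℤ) ≤ j' := Int.natCast_nonneg _
            nlinarith [mul_nonneg (show (0 : ℤ) ≤ (k : ℤ) - 1 - j' by linarith)
              (show (0 : ℤ) ≤ (k : ℤ) - 1 + j' by linarith)]
          have hH2' : ∀ ν μ : ℕ, 1 ≤ μ → μ ≤ ν → ν < k →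
              (10 : ℤ) ^ ν + (μ : ℤ) ^ 2 < 10 ^ k + (k : ℤ) ^ 2 - (t₀ : ℤ) := by
            intro ν μ h1 h2 h3
            have hμν : (μ : ℤ) ^ 2 ≤ 10 ^ ν := by
              have hc : (μ : ℤ) ≤ ν := by exact_mod_cast h2
              have h0 : (0 : ℤ) ≤ μ := Int.natCast_nonneg _
              nlinarith [int_sq_le ν]
            have h3' : (10 : ℤ) ^ ν ≤ 10 ^ (k - 1) := int_pow_mono (by omega)
            have h4 : (10 : ℤ) ^ k = 10 * 10 ^ (k - 1) := by
              obtain ⟨e, he⟩ : ∃ e, e + 1 = k := ⟨k - 1, by omega⟩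
              rw [← he, pow_succ]
              simp only [Nat.add_sub_cancel]
              ring
            have h1km := int_one_le_pow (k - 1)
            nlinarith
          have hak' : (k : ℤ) ≤ 10 ^ k + (k : ℤ) ^ 2 := by
            have := int_le_pow k
            nlinarith
          intro p hp0 hpk
          rw [hm,
            keyL1 k n i (t₀ : ℤ) p hi1 hin ht₀0 ht₀k hp0 hpk hak hH1 hH2,
            keyL1 k k k (t₀ : ℤ) p hk le_rfl ht₀0 ht₀k hp0 hpk hak' hH1' hH2']
          have hki : (k : ℤ) < i := by exact_mod_cast hik
          constructor
          · rintro ⟨j', h1, h2, h3⟩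
            have hp_eq : p = (t₀ : ℤ) := by
              rcases Nat.lt_or_ge i j' with hlt | hge
              · exfalso
                have hc : (i : ℤ) + 1 ≤ j' := by exact_mod_cast hlt
                nlinarith
              · have hji : j' = i := le_antisymm hge h1
                rw [hji] at h3
                linarith
            exact ⟨k, le_rfl, le_rfl, by rw [hp_eq]; ring⟩
          · rintro ⟨j', h1, h2, h3⟩
            have hji : j' = k := le_antisymm h2 h1
            rw [hji] at h3
            exact ⟨i, le_rfl, hin, by linarith⟩
  · push_neg at hA
    refine ⟨(10 : ℤ) ^ k + (k : ℤ) ^ 2 + 1, mem_Mrep_sing, ?_⟩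
    intro p hp0 hpk
    apply iff_of_false
    · intro h
      have h1 : ((p.toNat : ℤ)) = p := Int.toNat_of_nonneg hp0
      have := hA p.toNat (by rw [h1]; exact hpk)
      rw [h1] at this
      exact this h
    · rintro ⟨ν, μ, h1, h2, heq⟩
      have hμ0 : (0 : ℤ) ≤ μ := Int.natCast_nonneg _
      rcases le_or_gt ν k with h | h
      · have e1 : (10 : ℤ) ^ ν ≤ 10 ^ k := int_pow_mono h
        have e2 : (μ : ℤ) ^ 2 ≤ (k : ℤ) ^ 2 := by
          have hc : (μ : ℤ) ≤ k := by exact_mod_cast h2.trans h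
          nlinarith
        linarith
      · have e1 : (10 : ℤ) ^ (k + 1) ≤ 10 ^ ν := int_pow_mono h
        have e2 : (10 : ℤ) ^ (k + 1) = 10 * 10 ^ k := by ring
        have e3 := int_sq_le k
        have e4 := int_le_pow k
        have e5 : (1 : ℤ) ≤ (μ : ℤ) ^ 2 := by
          have : (1 : ℤ) ≤ (μ : ℤ) := by exact_mod_cast h1
          nlinarith
        linarith

/-- the indicator of `A` has cubic word complexity. -/
theorem stmt13 (k : ℕ) (hk : 0 < k) :
    Set.ncard {w : Fin k → ℕ | ∃ m : ℤ,
        ∀ j : Fin k, w j = Aset.indicator (fun _ => 1) (m + ((j : ℕ) : ℤ))} ≤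
      (k + 1) ^ 3 := by
  classical
  set word : ℤ → (Fin k → ℕ) :=
    fun m j => Aset.indicator (fun _ => 1) (m + ((j : ℕ) : ℤ)) with hword
  have hbridge : {w : Fin k → ℕ | ∃ m : ℤ,
      ∀ j : Fin k, w j = Aset.indicator (fun _ => 1) (m + ((j : ℕ) : ℤ))}
      = Set.range word := by
    ext w
    simp only [Set.mem_setOf_eq, Set.mem_range]
    constructor
    · rintro ⟨m, hm⟩; exact ⟨m, (funext fun j => (hm j).symm)⟩
    · rintro ⟨m, rfl⟩; exact ⟨m, fun j => rfl⟩
  rw [hbridge]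
  have hsub : Set.range word ⊆ word '' ((Mrep k : Set ℤ)) := by
    rintro w ⟨m, rfl⟩
    obtain ⟨m', hm', hiff⟩ := keyRep k hk m
    refine ⟨m', hm', ?_⟩
    funext j
    have h0 : (0 : ℤ) ≤ ((j : ℕ) : ℤ) := Int.natCast_nonneg _
    have h1 : (((j : ℕ) : ℤ)) < (k : ℤ) := by exact_mod_cast j.isLt
    have hiffj := hiff _ h0 h1
    show Aset.indicator (fun _ => 1) (m' + ((j : ℕ) : ℤ))
        = Aset.indicator (fun _ => 1) (m + ((j : ℕ) : ℤ))
    by_cases h : m + ((j : ℕ) : ℤ) ∈ Aset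
    · rw [Set.indicator_of_mem (hiffj.mp h), Set.indicator_of_mem h]
    · rw [Set.indicator_of_notMem (fun hc => h (hiffj.mpr hc)),
        Set.indicator_of_notMem h]
  calc (Set.range word).ncard
      ≤ (word '' ((Mrep k : Set ℤ))).ncard :=
        Set.ncard_le_ncard hsub (((Mrep k).finite_toSet).image _)
    _ ≤ ((Mrep k : Set ℤ)).ncard := Set.ncard_image_le ((Mrep k).finite_toSet)
    _ = (Mrep k).card := Set.ncard_coe_finset _
    _ ≤ (k + 1) ^ 3 := Mrep_card k hk
end

section
/- Let α : ℤ → {0,1} satisfy P_α(n) = 2ⁿ for all positive integers n, let A = {10ⁿ + i² : n, i ∈ ℕ, 1 ≤ i ≤ n}, and define η : ℤ² → {0,1} by η(i,j) = α(i+j) if j ∈ A and η(i,j) = α(i) otherwise. Then lim_{n→∞} (log P_η(n,n))/n² = 0. -/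
open Filter Set

lemma prect_le_aux (α : ℤ → Fin 2) (η : ℤ × ℤ → Fin 2)
    (hη : ∀ q : ℤ × ℤ, (q.2 ∈ Aset → η q = α (q.1 + q.2)) ∧ (q.2 ∉ Aset → η q = α q.1))
    (n : ℕ) : Prect η n n ≤ 2 ^ (4 * n) := by
  classical
  set S : Set (ℤ × ℤ) := {p : ℤ × ℤ | 0 ≤ p.1 ∧ p.1 < (n : ℤ) ∧ 0 ≤ p.2 ∧ p.2 < (n : ℤ)}
    with hSdef
  have hx1 : ∀ x : S, (x : ℤ × ℤ).1.toNat < n := by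
    intro x
    have h := x.2
    simp only [hSdef, Set.mem_setOf_eq] at h
    omega
  have hx2 : ∀ x : S, (x : ℤ × ℤ).2.toNat < n := by
    intro x
    have h := x.2
    simp only [hSdef, Set.mem_setOf_eq] at h
    omega
  have hx12 : ∀ x : S, (x : ℤ × ℤ).1.toNat + (x : ℤ × ℤ).2.toNat < 2 * n := by
    intro x
    have := hx1 x
    have := hx2 x
    omega
  set Ψ : ((Fin n → Bool) × (Fin n → Fin 2) × (Fin (2 * n) → Fin 2)) → (S → Fin 2) :=
    fun d x =>
      if d.1 ⟨(x : ℤ × ℤ).2.toNat, hx2 x⟩ = true then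
        d.2.2 ⟨(x : ℤ × ℤ).1.toNat + (x : ℤ × ℤ).2.toNat, hx12 x⟩
      else d.2.1 ⟨(x : ℤ × ℤ).1.toNat, hx1 x⟩ with hΨdef
  have hsub : {f : S → Fin 2 | ∃ m : ℤ × ℤ, ∀ x : S, f x = η ((x : ℤ × ℤ) + m)} ⊆
      Set.range Ψ := by
    rintro f ⟨m, hm⟩
    refine ⟨⟨fun j => decide (((j : ℕ) : ℤ) + m.2 ∈ Aset),
      fun i => α (((i : ℕ) : ℤ) + m.1),
      fun k => α (((k : ℕ) : ℤ) + m.1 + m.2)⟩, ?_⟩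
    funext x
    have h := x.2
    simp only [hSdef, Set.mem_setOf_eq] at h
    have e1 : ((x : ℤ × ℤ).1.toNat : ℤ) = (x : ℤ × ℤ).1 := Int.toNat_of_nonneg h.1
    have e2 : ((x : ℤ × ℤ).2.toNat : ℤ) = (x : ℤ × ℤ).2 := Int.toNat_of_nonneg h.2.2.1
    rw [hm x]
    have hq := hη ((x : ℤ × ℤ) + m)
    by_cases hA : (x : ℤ × ℤ).2 + m.2 ∈ Aset
    · have := hq.1 hA
      simp only [hΨdef, e2, hA, Prod.snd_add, Prod.fst_add] at this ⊢
      rw [if_pos (by simp), this]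
      congr 1
      push_cast [e1, e2]
      ring
    · have := hq.2 hA
      simp only [hΨdef, e2, hA, Prod.snd_add, Prod.fst_add] at this ⊢
      rw [if_neg (by simp), this]
      congr 1
      push_cast [e1]
      ring
  have hfin : (Set.range Ψ).Finite := Set.finite_range Ψ
  have h1 : Prect η n n ≤ (Set.range Ψ).ncard := by
    exact Set.ncard_le_ncard hsub hfin
  have h2 : (Set.range Ψ).ncard ≤
      Fintype.card ((Fin n → Bool) × (Fin n → Fin 2) × (Fin (2 * n) → Fin 2)) := by
    rw [← Set.image_univ]
    calc (Ψ '' Set.univ).ncard ≤ (Set.univ : Set ((Fin n → Bool) × (Fin n → Fin 2) ×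
        (Fin (2 * n) → Fin 2))).ncard := Set.ncard_image_le Set.finite_univ
      _ = _ := by rw [Set.ncard_univ, Nat.card_eq_fintype_card]
  have h3 : Fintype.card ((Fin n → Bool) × (Fin n → Fin 2) × (Fin (2 * n) → Fin 2)) =
      2 ^ (4 * n) := by
    simp [Fintype.card_prod, Fintype.card_fun, ← pow_add]
    ring_nf
  omega

/-- zero topological entropy of the example. -/
theorem stmt14 (α : ℤ → Fin 2) (hα : ∀ n : ℕ, 0 < n → wordCount α n = 2 ^ n)
    (η : ℤ × ℤ → Fin 2)
    (hη : ∀ q : ℤ × ℤ, (q.2 ∈ Aset → η q = α (q.1 + q.2)) ∧ (q.2 ∉ Aset → η q = α q.1)) :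
    Filter.Tendsto (fun n : ℕ => Real.log (Prect η n n) / (n : ℝ) ^ 2)
      Filter.atTop (nhds 0) := by
  have hbound := prect_le_aux α η hη
  have hnonneg : ∀ n : ℕ, 0 ≤ Real.log (Prect η n n) / (n : ℝ) ^ 2 := by
    intro n
    apply div_nonneg _ (by positivity)
    rcases Nat.eq_zero_or_pos (Prect η n n) with h | h
    · simp [h]
    · exact Real.log_nonneg (by exact_mod_cast h)
  have hle : ∀ᶠ n : ℕ in Filter.atTop,
      Real.log (Prect η n n) / (n : ℝ) ^ 2 ≤ 4 * Real.log 2 / (n : ℝ) := by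
    filter_upwards [Filter.eventually_ge_atTop 1] with n hn
    have hnpos : (0 : ℝ) < (n : ℝ) := by exact_mod_cast hn
    have hlog : Real.log (Prect η n n) ≤ 4 * n * Real.log 2 := by
      rcases Nat.eq_zero_or_pos (Prect η n n) with h | h
      · simp [h]
        positivity
      · calc Real.log (Prect η n n) ≤ Real.log ((2 : ℝ) ^ (4 * n)) := by
              apply Real.log_le_log (by exact_mod_cast h)
              exact_mod_cast hbound n
          _ = 4 * n * Real.log 2 := by rw [Real.log_pow]; push_cast; ring
    calc Real.log (Prect η n n) / (n : ℝ) ^ 2 ≤ (4 * n * Real.log 2) / (n : ℝ) ^ 2 := by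
          gcongr
      _ = 4 * Real.log 2 / (n : ℝ) := by field_simp
  have hzero : Filter.Tendsto (fun n : ℕ => 4 * Real.log 2 / (n : ℝ))
      Filter.atTop (nhds 0) := tendsto_const_div_atTop_nhds_zero_nat _
  exact squeeze_zero' (Filter.Eventually.of_forall hnonneg) hle hzero
end

section
/- Let α : ℤ → {0,1} satisfy P_α(n) = 2ⁿ for all positive integers n, and define η : ℤ² → {0,1,2,3} by η(n,k) = α(n) for k ≠ 0 and η(n,0) = α(n) + 2. Then h(e₂) = 0 and h(−e₂) = 0. -/
open Filter Set

/-! ### Auxiliary lemmas for stmt16 -/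

lemma coord_le_dist' (x y : R2) (i : Fin 2) : dist (x i) (y i) ≤ dist x y := by
  rw [EuclideanSpace.dist_eq]
  have h : dist (x i) (y i) = Real.sqrt (dist (x i) (y i) ^ 2) :=
    (Real.sqrt_sq dist_nonneg).symm
  rw [h]
  exact Real.sqrt_le_sqrt (Finset.single_le_sum
    (f := fun j => dist (x j) (y j) ^ 2) (fun _ _ => sq_nonneg _) (Finset.mem_univ i))

lemma lattice_mem_box' {u : R2} (hu0 : u 0 = 0) (hu1 : |u 1| ≤ 1) {s t : ℝ}
    (hs : 0 ≤ s) {p : ℤ × ℤ} (hp : p ∈ latticePts (segNbhd u s t)) :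
    |(p.1 : ℝ)| < t ∧ |(p.2 : ℝ)| < s + t := by
  obtain ⟨w, hw, hd⟩ := hp
  rw [segment_eq_image] at hw
  obtain ⟨θ, hθ, rfl⟩ := hw
  have hw0 : ((1 - θ) • (0 : R2) + θ • (s • u)) 0 = 0 := by
    show (1 - θ) * 0 + θ * (s * u 0) = 0
    rw [hu0]; ring
  have hw1 : ((1 - θ) • (0 : R2) + θ • (s • u)) 1 = θ * (s * u 1) := by
    show (1 - θ) * 0 + θ * (s * u 1) = _
    ring
  have h1 := (coord_le_dist' (toR2 p) _ 0).trans_lt hd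
  have h2 := (coord_le_dist' (toR2 p) _ 1).trans_lt hd
  beta_reduce at h1 h2
  rw [hw0] at h1
  rw [hw1] at h2
  have hx : |(p.1 : ℝ)| < t := by rwa [Real.dist_eq, sub_zero] at h1
  have hwb : |θ * (s * u 1)| ≤ s := by
    rw [abs_mul, abs_mul]
    calc |θ| * (|s| * |u 1|) ≤ 1 * (|s| * 1) := by
          apply mul_le_mul (abs_le.mpr ⟨by linarith [hθ.1], hθ.2⟩)
            (by apply mul_le_mul_of_nonneg_left hu1 (abs_nonneg _)) (by positivity) one_pos.le
      _ = s := by rw [one_mul, mul_one, abs_of_nonneg hs]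
  refine ⟨hx, ?_⟩
  rw [Real.dist_eq] at h2
  calc |(p.2 : ℝ)| = |((p.2 : ℝ) - θ * (s * u 1)) + θ * (s * u 1)| := by ring_nf
    _ ≤ |(p.2 : ℝ) - θ * (s * u 1)| + |θ * (s * u 1)| := abs_add_le _ _
    _ < t + s := add_lt_add_of_lt_of_le h2 hwb
    _ = s + t := by ring

open Classical in
lemma colorCount_le' (α : ℤ → Fin 4) (η : ℤ × ℤ → Fin 4)
    (hη : ∀ n k : ℤ, (k ≠ 0 → η (n, k) = α n) ∧ η (n, 0) = α n + 2)
    (S : Set (ℤ × ℤ)) (Is Js : Finset ℤ)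
    (hS : ∀ p ∈ S, p.1 ∈ Is ∧ p.2 ∈ Js) :
    colorCount η S ≤ (Js.card + 1) * 4 ^ Is.card := by
  classical
  have hinj : Set.InjOn
      (fun f : ↥S → Fin 4 =>
        if h : ∃ n : ℤ × ℤ, ∀ x : S, f x = η ((x : ℤ × ℤ) + n) then
          ((if hy : -(h.choose.2) ∈ Js then some ⟨-(h.choose.2), hy⟩ else none),
            fun x : {x // x ∈ Is} => α ((x : ℤ) + h.choose.1))
        else ((none : Option {y // y ∈ Js}), fun _ => 0))
      {f : S → Fin 4 | ∃ n : ℤ × ℤ, ∀ x : S, f x = η ((x : ℤ × ℤ) + n)} := by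
    intro f hf g hg heq
    have hf' : ∃ n : ℤ × ℤ, ∀ x : S, f x = η ((x : ℤ × ℤ) + n) := hf
    have hg' : ∃ n : ℤ × ℤ, ∀ x : S, g x = η ((x : ℤ × ℤ) + n) := hg
    simp only [dif_pos hf', dif_pos hg'] at heq
    set n := hf'.choose with hn
    set m := hg'.choose with hm
    have hfs := hf'.choose_spec
    have hgs := hg'.choose_spec
    have hopt := (Prod.ext_iff.mp heq).1
    have hword := (Prod.ext_iff.mp heq).2
    funext x
    obtain ⟨hx1, hx2⟩ := hS (x : ℤ × ℤ) x.2
    have hw : α ((x : ℤ × ℤ).1 + n.1) = α ((x : ℤ × ℤ).1 + m.1) :=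
      congrFun hword ⟨(x : ℤ × ℤ).1, hx1⟩
    rw [hfs x, hgs x]
    show η ((x : ℤ × ℤ).1 + n.1, (x : ℤ × ℤ).2 + n.2)
      = η ((x : ℤ × ℤ).1 + m.1, (x : ℤ × ℤ).2 + m.2)
    by_cases h2 : (x : ℤ × ℤ).2 + n.2 = 0
    · have hxn : (x : ℤ × ℤ).2 = -n.2 := by linarith
      have hyn : -n.2 ∈ Js := hxn ▸ hx2
      rw [dif_pos hyn] at hopt
      have hym : -m.2 ∈ Js := by
        by_contra hc
        rw [dif_neg hc] at hopt
        simp at hopt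
      rw [dif_pos hym] at hopt
      have heqnm : -n.2 = -m.2 := Subtype.ext_iff.mp (Option.some_injective _ hopt)
      have h2' : (x : ℤ × ℤ).2 + m.2 = 0 := by omega
      rw [h2, h2', (hη ((x : ℤ × ℤ).1 + n.1) 0).2, (hη ((x : ℤ × ℤ).1 + m.1) 0).2, hw]
    · have hxn : (x : ℤ × ℤ).2 ≠ -n.2 := fun hc => h2 (by omega)
      have h2' : (x : ℤ × ℤ).2 + m.2 ≠ 0 := by
        intro hc
        have hxm : (x : ℤ × ℤ).2 = -m.2 := by linarith
        have hym : -m.2 ∈ Js := hxm ▸ hx2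
        rw [dif_pos hym] at hopt
        have hyn : -n.2 ∈ Js := by
          by_contra hcc
          rw [dif_neg hcc] at hopt
          simp at hopt
        rw [dif_pos hyn] at hopt
        have heqnm : -n.2 = -m.2 := Subtype.ext_iff.mp (Option.some_injective _ hopt)
        exact hxn (by omega)
      rw [(hη ((x : ℤ × ℤ).1 + n.1) _).1 h2, (hη ((x : ℤ × ℤ).1 + m.1) _).1 h2', hw]
  have hcard := Set.ncard_le_ncard_of_injOn _ (fun a _ => Set.mem_univ _) hinj
    (Set.finite_univ (α := Option {y // y ∈ Js} × ({x // x ∈ Is} → Fin 4)))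
  rw [Set.ncard_univ, Nat.card_eq_fintype_card, Fintype.card_prod, Fintype.card_option,
    Fintype.card_fun, Fintype.card_coe, Fintype.card_coe, Fintype.card_fin] at hcard
  calc colorCount η S
      = Set.ncard {f : S → Fin 4 | ∃ n : ℤ × ℤ, ∀ x : S, f x = η ((x : ℤ × ℤ) + n)} := rfl
    _ ≤ (Js.card + 1) * 4 ^ Is.card := hcard

lemma one_le_colorCount' {A : Type*} [Finite A] (η : ℤ × ℤ → A) (S : Set (ℤ × ℤ))
    (hfin : S.Finite) : 1 ≤ colorCount η S := by
  have : Finite ↥S := hfin.to_subtype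
  have hfin2 : {f : S → A | ∃ n : ℤ × ℤ, ∀ x : S, f x = η ((x : ℤ × ℤ) + n)}.Finite :=
    Set.Finite.subset Set.finite_univ (Set.subset_univ _)
  exact (Set.ncard_pos hfin2).mpr ⟨fun x => η ((x : ℤ × ℤ) + 0), 0, fun x => rfl⟩

open Topology in
lemma limsup_part' (g : ℝ → ℕ) (K B : ℝ) (hK : 1 ≤ K) (hB : 0 ≤ B)
    (h1 : ∀ s : ℝ, 1 ≤ s → 1 ≤ g s)
    (h2 : ∀ s : ℝ, 1 ≤ s → (g s : ℝ) ≤ (s + B) * K) :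
    Filter.limsup (fun s : ℝ => ((Real.log (g s) / s : ℝ) : EReal)) Filter.atTop = 0 := by
  have htop : Tendsto (fun s : ℝ => 2 * Real.log s / s) atTop (𝓝 0) := by
    have h := Real.isLittleO_log_id_atTop.tendsto_div_nhds_zero
    have h2' := h.const_mul (2 : ℝ)
    simp only [mul_zero] at h2'
    simpa only [id_eq, ← mul_div_assoc] using h2'
  have hlow : ∀ᶠ s : ℝ in atTop, (0 : ℝ) ≤ Real.log (g s) / s := by
    filter_upwards [eventually_ge_atTop (1 : ℝ)] with s hs
    have := h1 s hs
    exact div_nonneg (Real.log_nonneg (by exact_mod_cast this)) (by linarith)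
  have hup : ∀ᶠ s : ℝ in atTop, Real.log (g s) / s ≤ 2 * Real.log s / s := by
    filter_upwards [eventually_ge_atTop (1 : ℝ), eventually_ge_atTop ((1 + B) * K)]
      with s hs1 hsK
    have hgpos : (0 : ℝ) < (g s : ℝ) := by exact_mod_cast h1 s hs1
    have hss : (g s : ℝ) ≤ s * s := by
      calc (g s : ℝ) ≤ (s + B) * K := h2 s hs1
        _ ≤ ((1 + B) * s) * K := by
              have hsb : s + B ≤ (1 + B) * s := by nlinarith
              nlinarith
        _ = ((1 + B) * K) * s := by ring
        _ ≤ s * s := by nlinarith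
    have hlog : Real.log (g s) ≤ Real.log (s * s) := by
      gcongr
    have hlog2 : Real.log (s * s) = 2 * Real.log s := by
      rw [Real.log_mul (by linarith) (by linarith)]; ring
    rw [hlog2] at hlog
    gcongr
  have htend : Tendsto (fun s : ℝ => Real.log (g s) / s) atTop (𝓝 0) :=
    tendsto_of_tendsto_of_tendsto_of_le_of_le' tendsto_const_nhds htop hlow hup
  have hco : Tendsto (fun s : ℝ => ((Real.log (g s) / s : ℝ) : EReal)) atTop
      (𝓝 (0 : EReal)) := by
    rw [← EReal.coe_zero]
    exact EReal.tendsto_coe.mpr htend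
  exact hco.limsup_eq


/-- zero directional entropy in the vertical directions. -/
theorem stmt16 (α : ℤ → Fin 4) (hα01 : ∀ x : ℤ, α x = 0 ∨ α x = 1)
    (hα : ∀ n : ℕ, 0 < n → wordCount α n = 2 ^ n)
    (η : ℤ × ℤ → Fin 4)
    (hη : ∀ n k : ℤ, (k ≠ 0 → η (n, k) = α n) ∧ η (n, 0) = α n + 2) :
    dirEnt η e2 = 0 ∧ dirEnt η (-e2) = 0 := by
  have key : ∀ u : R2, u 0 = 0 → |u 1| ≤ 1 → dirEnt η u = 0 := by
    intro u hu0 hu1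
    have hlim : ∀ t : ℝ, 0 < t →
        Filter.limsup (fun s : ℝ => ((Real.log (Pc η (segNbhd u s t)) / s : ℝ) : EReal))
          Filter.atTop = 0 := by
      intro t ht
      refine limsup_part' _ (2 * 4 ^ (Finset.Icc (-⌈t⌉) ⌈t⌉).card) (t + 2) ?_ (by linarith)
        ?_ ?_
      · have h4 : (1 : ℝ) ≤ 4 ^ (Finset.Icc (-⌈t⌉) ⌈t⌉).card :=
          one_le_pow₀ (by norm_num)
        linarith
      all_goals
        intro s hs
        have hbox : ∀ p ∈ latticePts (segNbhd u s t),
            p.1 ∈ Finset.Icc (-⌈t⌉) ⌈t⌉ ∧ p.2 ∈ Finset.Icc (-⌈s + t⌉) ⌈s + t⌉ := by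
          intro p hp
          obtain ⟨ha, hb⟩ := lattice_mem_box' hu0 hu1 (by linarith : (0:ℝ) ≤ s) hp
          have ha' := abs_lt.mp ha
          have hb' := abs_lt.mp hb
          have hc1 := Int.le_ceil t
          have hc2 := Int.le_ceil (s + t)
          refine ⟨Finset.mem_Icc.mpr ⟨?_, ?_⟩, Finset.mem_Icc.mpr ⟨?_, ?_⟩⟩
          · have hr : ((-⌈t⌉ : ℤ) : ℝ) ≤ ((p.1 : ℤ) : ℝ) := by push_cast; linarith
            exact_mod_cast hr
          · have hr : ((p.1 : ℤ) : ℝ) ≤ ((⌈t⌉ : ℤ) : ℝ) := by push_cast; linarith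
            exact_mod_cast hr
          · have hr : ((-⌈s + t⌉ : ℤ) : ℝ) ≤ ((p.2 : ℤ) : ℝ) := by push_cast; linarith
            exact_mod_cast hr
          · have hr : ((p.2 : ℤ) : ℝ) ≤ ((⌈s + t⌉ : ℤ) : ℝ) := by push_cast; linarith
            exact_mod_cast hr
      · -- 1 ≤ Pc
        have hsub : latticePts (segNbhd u s t) ⊆
            ↑(Finset.Icc (-⌈t⌉) ⌈t⌉ ×ˢ Finset.Icc (-⌈s + t⌉) ⌈s + t⌉) := by
          intro p hp
          obtain ⟨hp1, hp2⟩ := hbox p hp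
          exact Finset.mem_coe.mpr (Finset.mem_product.mpr ⟨hp1, hp2⟩)
        exact one_le_colorCount' η _ (Set.Finite.subset (Finset.finite_toSet _) hsub)
      · -- upper bound
        have hb := colorCount_le' α η hη (latticePts (segNbhd u s t)) _ _ hbox
        have hcpos : 0 < ⌈s + t⌉ := Int.ceil_pos.mpr (by linarith)
        have hcardJ : ((Finset.Icc (-⌈s + t⌉) ⌈s + t⌉).card : ℝ) = 2 * (⌈s + t⌉ : ℝ) + 1 := by
          rw [Int.card_Icc]
          have h1' : ⌈s + t⌉ + 1 - -⌈s + t⌉ = 2 * ⌈s + t⌉ + 1 := by ring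
          rw [h1']
          have hnn : ((2 * ⌈s + t⌉ + 1).toNat : ℤ) = 2 * ⌈s + t⌉ + 1 :=
            Int.toNat_of_nonneg (by linarith)
          exact_mod_cast hnn
        have hceil : (⌈s + t⌉ : ℝ) ≤ s + t + 1 := le_of_lt (Int.ceil_lt_add_one _)
        have hJb : ((Finset.Icc (-⌈s + t⌉) ⌈s + t⌉).card : ℝ) + 1 ≤ 2 * (s + (t + 2)) := by
          rw [hcardJ]; linarith
        have hb' : (Pc η (segNbhd u s t) : ℝ) ≤
            (((Finset.Icc (-⌈s + t⌉) ⌈s + t⌉).card : ℝ) + 1) *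
              4 ^ (Finset.Icc (-⌈t⌉) ⌈t⌉).card := by
          exact_mod_cast hb
        have h4pos : (0 : ℝ) ≤ 4 ^ (Finset.Icc (-⌈t⌉) ⌈t⌉).card := by positivity
        calc (Pc η (segNbhd u s t) : ℝ)
            ≤ (((Finset.Icc (-⌈s + t⌉) ⌈s + t⌉).card : ℝ) + 1) *
              4 ^ (Finset.Icc (-⌈t⌉) ⌈t⌉).card := hb'
          _ ≤ (2 * (s + (t + 2))) * 4 ^ (Finset.Icc (-⌈t⌉) ⌈t⌉).card := by
              exact mul_le_mul_of_nonneg_right hJb h4pos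
          _ = (s + (t + 2)) * (2 * 4 ^ (Finset.Icc (-⌈t⌉) ⌈t⌉).card) := by ring
    haveI : Nonempty ↥(Set.Ioi (0 : ℝ)) := ⟨⟨1, Set.mem_Ioi.mpr one_pos⟩⟩
    calc dirEnt η u
        = ⨆ _ : Set.Ioi (0 : ℝ), (0 : EReal) :=
          iSup_congr (fun tt => hlim (tt : ℝ) tt.2)
      _ = 0 := iSup_const
  refine ⟨key e2 rfl (by show |(1 : ℝ)| ≤ 1; norm_num), key (-e2) ?_ ?_⟩
  · show -(e2 0) = 0
    norm_num [e2]
  · show |(-e2) 1| ≤ 1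
    have : (-e2) 1 = -1 := by show -(e2 1) = -1; norm_num [e2]
    rw [this]
    norm_num
end

section
/- Let α : ℤ → {0,1} satisfy P_α(n) = 2ⁿ for all positive integers n, and define η : ℤ² → {0,1,2,3} by η(n,k) = α(n) for k ≠ 0 and η(n,0) = α(n) + 2. Then for every unit vector u = (u₁,u₂) ∈ ℝ² with u₁ ≠ 0, h(u) ≥ |u₁| · log 2 > 0. -/
open Filter Set

section AuxStmt17

/-- Reduction mod 2 on `Fin 4`, recovering `α` from `η`-values. -/
private def mod2 : Fin 4 → Fin 4 := fun v => ⟨v.val % 2, by omega⟩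

private lemma abs_coord_le_norm (v : R2) (i : Fin 2) : |v i| ≤ ‖v‖ := by
  rw [EuclideanSpace.norm_eq]
  have h : ‖v i‖ ^ 2 ≤ ∑ j, ‖v j‖ ^ 2 :=
    Finset.single_le_sum (f := fun j => ‖v j‖ ^ 2) (fun _ _ => sq_nonneg _) (Finset.mem_univ i)
  have h2 := Real.sqrt_le_sqrt h
  rwa [Real.sqrt_sq (norm_nonneg _), Real.norm_eq_abs] at h2

/-- Counting lemma: if the lattice points of `K` contain points with `n` consecutive
first coordinates, then `P_η(K) ≥ P_α(n)`. -/
private lemma count_ge (α : ℤ → Fin 4) (hα01 : ∀ x : ℤ, α x = 0 ∨ α x = 1)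
    (η : ℤ × ℤ → Fin 4)
    (hη : ∀ n k : ℤ, (k ≠ 0 → η (n, k) = α n) ∧ η (n, 0) = α n + 2)
    (K : Set R2) (hfin : (latticePts K).Finite) (n : ℕ) (x₀ : ℤ) (k : Fin n → ℤ)
    (hmem : ∀ j : Fin n, (x₀ + (j : ℕ), k j) ∈ latticePts K) :
    wordCount α n ≤ Pc η K := by
  classical
  haveI : Finite ↥(latticePts K) := hfin.to_subtype
  have hF : {f : ↥(latticePts K) → Fin 4 |
      ∃ nn : ℤ × ℤ, ∀ x : ↥(latticePts K), f x = η ((x : ℤ × ℤ) + nn)}.Finite :=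
    Set.toFinite _
  have hsub : {w : Fin n → Fin 4 | ∃ m : ℤ, ∀ j : Fin n, w j = α (m + (j : ℕ))} ⊆
      (fun (f : ↥(latticePts K) → Fin 4) (j : Fin n) =>
          mod2 (f ⟨(x₀ + (j : ℕ), k j), hmem j⟩)) ''
        {f : ↥(latticePts K) → Fin 4 |
          ∃ nn : ℤ × ℤ, ∀ x : ↥(latticePts K), f x = η ((x : ℤ × ℤ) + nn)} := by
    rintro w ⟨m, hm⟩
    refine ⟨fun x => η ((x : ℤ × ℤ) + (m - x₀, 0)), ⟨(m - x₀, 0), fun _ => rfl⟩, ?_⟩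
    funext j
    show mod2 (η (((x₀ + (j : ℕ), k j) : ℤ × ℤ) + (m - x₀, 0))) = w j
    have hpt : ((x₀ + (j : ℕ), k j) : ℤ × ℤ) + (m - x₀, 0) = (m + (j : ℕ), k j) := by
      simp [Prod.ext_iff]; ring
    rw [hpt, hm j]
    by_cases hk : k j = 0
    · rw [hk, (hη (m + (j : ℕ)) 0).2]
      rcases hα01 (m + (j : ℕ)) with h | h <;> rw [h] <;> decide
    · rw [(hη (m + (j : ℕ)) (k j)).1 hk]
      rcases hα01 (m + (j : ℕ)) with h | h <;> rw [h] <;> decide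
  show Set.ncard {w : Fin n → Fin 4 | ∃ m : ℤ, ∀ j : Fin n, w j = α (m + (j : ℕ))} ≤
    Set.ncard {f : ↥(latticePts K) → Fin 4 |
      ∃ nn : ℤ × ℤ, ∀ x : ↥(latticePts K), f x = η ((x : ℤ × ℤ) + nn)}
  exact le_trans (Set.ncard_le_ncard hsub (hF.image _)) (Set.ncard_image_le hF)

/-- The lattice points of the neighborhood of a segment form a finite set. -/
private lemma latticePts_finite (u : R2) (hu : ‖u‖ = 1) (s : ℝ) (hs : 0 < s) :
    (latticePts (segNbhd u s 1)).Finite := by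
  set M : ℤ := ⌈s + 1⌉ with hM
  apply Set.Finite.subset (Set.finite_Icc ((-M, -M) : ℤ × ℤ) (M, M))
  rintro q ⟨w, hw, hdq⟩
  have hwn : ‖w‖ ≤ s := by
    rw [segment_eq_image] at hw
    obtain ⟨θ, ⟨hθ0, hθ1⟩, rfl⟩ := hw
    simp only [smul_zero, zero_add, smul_smul]
    rw [norm_smul, hu, mul_one, Real.norm_eq_abs, abs_of_nonneg (mul_nonneg hθ0 hs.le)]
    exact mul_le_of_le_one_left hs.le hθ1
  have hq : ‖toR2 q‖ ≤ s + 1 := by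
    have h := dist_triangle (toR2 q) w 0
    rw [dist_zero_right, dist_zero_right] at h
    linarith
  have h1 : |(q.1 : ℝ)| ≤ s + 1 := le_trans (abs_coord_le_norm (toR2 q) 0) hq
  have h2 : |(q.2 : ℝ)| ≤ s + 1 := le_trans (abs_coord_le_norm (toR2 q) 1) hq
  have hM1 : s + 1 ≤ (M : ℝ) := Int.le_ceil _
  have hq1 : |q.1| ≤ M := by
    have : (|q.1| : ℝ) ≤ (M : ℝ) := by linarith [h1, h2, hM1]
    exact_mod_cast this
  have hq2 : |q.2| ≤ M := by
    have : (|q.2| : ℝ) ≤ (M : ℝ) := by linarith [h1, h2, hM1]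
    exact_mod_cast this
  rw [abs_le] at hq1 hq2
  exact Set.mem_Icc.mpr ⟨⟨hq1.1, hq2.1⟩, hq1.2, hq2.2⟩

/-- Key complexity lower bound for a non-vertical direction `u`. -/
private lemma key_count (α : ℤ → Fin 4) (hα01 : ∀ x : ℤ, α x = 0 ∨ α x = 1)
    (hα : ∀ n : ℕ, 0 < n → wordCount α n = 2 ^ n)
    (η : ℤ × ℤ → Fin 4)
    (hη : ∀ n k : ℤ, (k ≠ 0 → η (n, k) = α n) ∧ η (n, 0) = α n + 2)
    (u : R2) (hu : ‖u‖ = 1) (hu0 : u 0 ≠ 0) (s : ℝ) (hs : 0 < s) :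
    2 ^ (⌊s * |u 0|⌋₊ + 1) ≤ Pc η (segNbhd u s 1) := by
  set n : ℕ := ⌊s * |u 0|⌋₊ + 1 with hn
  set x₀ : ℤ := if 0 < u 0 then 0 else 1 - n with hx₀
  have hfl : (⌊s * |u 0|⌋₊ : ℕ) ≤ s * |u 0| := Nat.floor_le (by positivity)
  have hnr : (n : ℝ) = (⌊s * |u 0|⌋₊ : ℕ) + 1 := by rw [hn]; push_cast; ring
  have hc : ∀ j : Fin n, 0 ≤ ((x₀ + (j : ℕ) : ℤ) : ℝ) / u 0 ∧
      ((x₀ + (j : ℕ) : ℤ) : ℝ) / u 0 ≤ s := by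
    intro j
    have hj1 : ((j : ℕ) : ℝ) ≤ (n : ℝ) - 1 := by
      have h : ((j : ℕ) : ℝ) + 1 ≤ (n : ℝ) := by exact_mod_cast Nat.succ_le_of_lt j.isLt
      linarith
    have hj0 : (0 : ℝ) ≤ ((j : ℕ) : ℝ) := Nat.cast_nonneg _
    rcases lt_or_gt_of_ne hu0 with hneg | hpos
    · have hx : x₀ = 1 - n := if_neg (not_lt.mpr hneg.le)
      have habs : s * u 0 = -(s * |u 0|) := by rw [abs_of_neg hneg]; ring
      have hnum : ((x₀ + (j : ℕ) : ℤ) : ℝ) = 1 - (n : ℝ) + ((j : ℕ) : ℝ) := by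
        rw [hx]; push_cast; ring
      constructor
      · exact div_nonneg_of_nonpos (by rw [hnum]; linarith) hneg.le
      · rw [div_le_iff_of_neg hneg, hnum]
        linarith
    · have hx : x₀ = 0 := if_pos hpos
      have habs : s * u 0 = s * |u 0| := by rw [abs_of_pos hpos]
      have hnum : ((x₀ + (j : ℕ) : ℤ) : ℝ) = ((j : ℕ) : ℝ) := by rw [hx]; push_cast; ring
      constructor
      · rw [hnum]; positivity
      · rw [div_le_iff₀ hpos, hnum]
        linarith
  have hcx : ∀ j : Fin n, (((x₀ + (j : ℕ) : ℤ) : ℝ) / u 0) * u 0 = ((x₀ + (j : ℕ) : ℤ) : ℝ) :=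
    fun j => div_mul_cancel₀ _ hu0
  have hmem : ∀ j : Fin n,
      (x₀ + (j : ℕ), round ((((x₀ + (j : ℕ) : ℤ) : ℝ) / u 0) * u 1)) ∈
        latticePts (segNbhd u s 1) := by
    intro j
    set c : ℝ := ((x₀ + (j : ℕ) : ℤ) : ℝ) / u 0 with hcdef
    refine ⟨c • u, ?_, ?_⟩
    · rw [segment_eq_image]
      refine ⟨c / s, ⟨div_nonneg (hc j).1 hs.le, (div_le_one hs).mpr (hc j).2⟩, ?_⟩
      simp [smul_smul, div_mul_cancel₀ _ hs.ne']
    · rw [EuclideanSpace.dist_eq, Fin.sum_univ_two]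
      have h0 : toR2 (x₀ + (j : ℕ), round (c * u 1)) 0 = ((x₀ + (j : ℕ) : ℤ) : ℝ) := rfl
      have h1 : toR2 (x₀ + (j : ℕ), round (c * u 1)) 1 = ((round (c * u 1) : ℤ) : ℝ) := rfl
      have hsm0 : (c • u) 0 = c * u 0 := rfl
      have hsm1 : (c • u) 1 = c * u 1 := rfl
      rw [Real.dist_eq, Real.dist_eq, h0, h1, hsm0, hsm1]
      have hr : |((round (c * u 1) : ℤ) : ℝ) - c * u 1| ≤ 1 / 2 := by
        rw [abs_sub_comm]; exact abs_sub_round _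
      have hsum : |((x₀ + (j : ℕ) : ℤ) : ℝ) - c * u 0| ^ 2 +
          |((round (c * u 1) : ℤ) : ℝ) - c * u 1| ^ 2 ≤ 1 / 4 := by
        rw [show c * u 0 = ((x₀ + (j : ℕ) : ℤ) : ℝ) from hcx j, sub_self, abs_zero]
        nlinarith [hr, abs_nonneg (((round (c * u 1) : ℤ) : ℝ) - c * u 1)]
      calc Real.sqrt _ ≤ Real.sqrt (1 / 4) := Real.sqrt_le_sqrt hsum
        _ < 1 := by
          rw [show (1 / 4 : ℝ) = (1 / 2) ^ 2 by norm_num, Real.sqrt_sq (by norm_num)]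
          norm_num
  have hfin := latticePts_finite u hu s hs
  calc (2 : ℕ) ^ n = wordCount α n := (hα n (Nat.succ_pos _)).symm
    _ ≤ Pc η (segNbhd u s 1) := count_ge α hα01 η hη _ hfin n x₀ _ hmem

end AuxStmt17

/-- positive directional entropy in all non-vertical directions. -/
theorem stmt17 (α : ℤ → Fin 4) (hα01 : ∀ x : ℤ, α x = 0 ∨ α x = 1)
    (hα : ∀ n : ℕ, 0 < n → wordCount α n = 2 ^ n)
    (η : ℤ × ℤ → Fin 4)
    (hη : ∀ n k : ℤ, (k ≠ 0 → η (n, k) = α n) ∧ η (n, 0) = α n + 2) :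
    ∀ u : R2, ‖u‖ = 1 → u 0 ≠ 0 →
      ((|u 0| * Real.log 2 : ℝ) : EReal) ≤ dirEnt η u ∧ 0 < |u 0| * Real.log 2 := by
  intro u hu hu0
  have hlog2 : (0 : ℝ) < Real.log 2 := Real.log_pos (by norm_num)
  have habs : (0 : ℝ) < |u 0| := abs_pos.mpr hu0
  refine ⟨?_, mul_pos habs hlog2⟩
  have hstep : ∀ s : ℝ, 0 < s →
      |u 0| * Real.log 2 ≤ Real.log (Pc η (segNbhd u s 1)) / s := by
    intro s hs
    have hkey : 2 ^ (⌊s * |u 0|⌋₊ + 1) ≤ Pc η (segNbhd u s 1) :=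
      key_count α hα01 hα η hη u hu hu0 s hs
    set n : ℕ := ⌊s * |u 0|⌋₊ + 1 with hn
    have h1 : ((2 : ℝ)) ^ n ≤ (Pc η (segNbhd u s 1) : ℝ) := by exact_mod_cast hkey
    have h2 : (n : ℝ) * Real.log 2 ≤ Real.log (Pc η (segNbhd u s 1)) := by
      have h := Real.log_le_log (by positivity) h1
      rwa [Real.log_pow] at h
    have h3 : s * |u 0| ≤ (n : ℝ) := by
      have h := Nat.lt_floor_add_one (s * |u 0|)
      have hnr : (n : ℝ) = (⌊s * |u 0|⌋₊ : ℕ) + 1 := by rw [hn]; push_cast; ring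
      linarith
    rw [le_div_iff₀ hs]
    nlinarith [hlog2.le]
  have hlim : ((|u 0| * Real.log 2 : ℝ) : EReal) ≤
      Filter.limsup (fun s : ℝ =>
        ((Real.log (Pc η (segNbhd u s
            (((⟨1, Set.mem_Ioi.mpr one_pos⟩ : Set.Ioi (0 : ℝ)) : ℝ)))) / s : ℝ) : EReal))
        Filter.atTop := by
    apply Filter.le_limsup_of_frequently_le'
    refine ((Filter.eventually_gt_atTop (0 : ℝ)).mono fun s hs => ?_).frequently
    exact EReal.coe_le_coe_iff.mpr (hstep s hs)
  exact le_trans hlim (le_iSup (fun t : Set.Ioi (0 : ℝ) =>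
    Filter.limsup (fun s : ℝ =>
      ((Real.log (Pc η (segNbhd u s (t : ℝ))) / s : ℝ) : EReal)) Filter.atTop)
    ⟨1, Set.mem_Ioi.mpr one_pos⟩)
end

section
/- Let α : ℤ → {0,1} satisfy P_α(n) = 2ⁿ for all positive integers n, and define η : ℤ² → {0,1,2,3} by η(n,k) = α(n) for k ≠ 0 and η(n,0) = α(n) + 2. Then for every compact set K ⊆ ℝ², setting k₁ = |{i ∈ ℤ : K ∩ ({i} × ℤ) ≠ ∅}| and k₂ = |{j ∈ ℤ : K ∩ (ℤ × {j}) ≠ ∅}|, one has P_η(K) = (k₂ + 1) · 2^{k₁}. -/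
open Filter Set

section Aux

def enc4 (u m : Bool) : Fin 4 := (if u then 1 else 0) + (if m then 2 else 0)

lemma enc4_inj : ∀ u m u' m', enc4 u m = enc4 u' m' → u = u' ∧ m = m' := by decide

lemma enc4_eq (c : Fin 4) (hc : c = 0 ∨ c = 1) (m : Bool) :
    enc4 (decide (c = 1)) m = c + (if m then 2 else 0) := by
  rcases hc with rfl | rfl <;> cases m <;> decide

lemma enc4_eq' (u m : Bool) : enc4 u m = (if u then 1 else 0) + (if m then 2 else 0) := rfl

lemma abs_coord_le (x : R2) (i : Fin 2) : |x i| ≤ ‖x‖ := by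
  rw [EuclideanSpace.norm_eq]
  calc |x i| = √(|x i|^2) := by rw [Real.sqrt_sq_eq_abs, abs_abs]
  _ ≤ _ := by
      apply Real.sqrt_le_sqrt
      have := Finset.single_le_sum (f := fun j => ‖x j‖^2) (fun j _ => by positivity)
        (Finset.mem_univ i)
      simpa using this

lemma words_all (α : ℤ → Fin 4) (hα01 : ∀ x : ℤ, α x = 0 ∨ α x = 1)
    (hα : ∀ n : ℕ, 0 < n → wordCount α n = 2 ^ n) (L : ℕ) (v : Fin L → Fin 4)
    (hv : ∀ j, v j = 0 ∨ v j = 1) : ∃ m : ℤ, ∀ j : Fin L, v j = α (m + (j : ℕ)) := by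
  rcases Nat.eq_zero_or_pos L with h0 | hL
  · subst h0; exact ⟨0, fun j => absurd j.2 (by omega)⟩
  set W : Set (Fin L → Fin 4) := {w | ∃ m : ℤ, ∀ j : Fin L, w j = α (m + (j:ℕ))} with hWdef
  set W' : Set (Fin L → Fin 4) := {w | ∀ j, w j = 0 ∨ w j = 1} with hW'def
  have hsub : W ⊆ W' := by
    rintro w ⟨m, hm⟩ j
    rw [hm j]; exact hα01 _
  have hW'fin : W'.Finite := Set.toFinite _
  have hW'card : W'.ncard = 2 ^ L := by
    have himg : W' = Set.range (fun b : Fin L → Bool => fun j => if b j then (1 : Fin 4) else 0) := by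
      ext w
      constructor
      · intro hw
        refine ⟨fun j => w j = 1, ?_⟩
        funext j
        rcases hw j with h | h <;> simp [h]
      · rintro ⟨b, rfl⟩ j
        by_cases h : b j <;> simp [h]
    rw [himg, ← Nat.card_coe_set_eq, Nat.card_range_of_injective, Nat.card_fun] <;> try
      simp [Nat.card_eq_fintype_card]
    intro b b' h
    funext j
    have := congrFun h j
    by_cases hb : b j <;> by_cases hb' : b' j <;> simp_all
  have hWW : W = W' := by
    refine Set.eq_of_subset_of_ncard_le hsub ?_ hW'fin
    rw [hW'card]
    have : W.ncard = 2 ^ L := hα L hL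
    omega
  have : v ∈ W' := hv
  rw [← hWW] at this
  exact this

end Aux

/-- the exact complexity formula for the example. -/
theorem stmt18 (α : ℤ → Fin 4) (hα01 : ∀ x : ℤ, α x = 0 ∨ α x = 1)
    (hα : ∀ n : ℕ, 0 < n → wordCount α n = 2 ^ n)
    (η : ℤ × ℤ → Fin 4)
    (hη : ∀ n k : ℤ, (k ≠ 0 → η (n, k) = α n) ∧ η (n, 0) = α n + 2) :
    ∀ K : Set R2, IsCompact K →
      Pc η K = (Set.ncard {j : ℤ | ∃ i : ℤ, toR2 (i, j) ∈ K} + 1) *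
        2 ^ Set.ncard {i : ℤ | ∃ j : ℤ, toR2 (i, j) ∈ K} := by
  intro K hK
  classical
  set S : Set (ℤ × ℤ) := latticePts K with hSdef
  set I : Set ℤ := {i : ℤ | ∃ j : ℤ, toR2 (i, j) ∈ K} with hIdef
  set J : Set ℤ := {j : ℤ | ∃ i : ℤ, toR2 (i, j) ∈ K} with hJdef
  obtain ⟨R, hR⟩ := hK.isBounded.subset_closedBall 0
  have htoR0 : ∀ p : ℤ × ℤ, toR2 p 0 = (p.1 : ℝ) := fun p => rfl
  have htoR1 : ∀ p : ℤ × ℤ, toR2 p 1 = (p.2 : ℝ) := fun p => rfl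
  have hcoord : ∀ p : ℤ × ℤ, p ∈ S → -⌈R⌉ ≤ p.1 ∧ p.1 ≤ ⌈R⌉ ∧ -⌈R⌉ ≤ p.2 ∧ p.2 ≤ ⌈R⌉ := by
    intro p hp
    have hnorm : ‖toR2 p‖ ≤ R := by
      have := hR hp
      rwa [Metric.mem_closedBall, dist_zero_right] at this
    have h0 : |(p.1 : ℝ)| ≤ R := htoR0 p ▸ le_trans (abs_coord_le (toR2 p) 0) hnorm
    have h1 : |(p.2 : ℝ)| ≤ R := htoR1 p ▸ le_trans (abs_coord_le (toR2 p) 1) hnorm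
    have hceil := Int.le_ceil R
    rw [abs_le] at h0 h1
    refine ⟨?_, ?_, ?_, ?_⟩
    · exact_mod_cast le_trans (neg_le_neg hceil) h0.1
    · exact_mod_cast le_trans h0.2 hceil
    · exact_mod_cast le_trans (neg_le_neg hceil) h1.1
    · exact_mod_cast le_trans h1.2 hceil
  have hSfin : S.Finite := by
    refine Set.Finite.subset ((Set.finite_Icc (-⌈R⌉) ⌈R⌉).prod (Set.finite_Icc (-⌈R⌉) ⌈R⌉)) ?_
    intro p hp
    obtain ⟨h1, h2, h3, h4⟩ := hcoord p hp
    exact ⟨⟨h1, h2⟩, ⟨h3, h4⟩⟩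
  have hIm : ∀ x : ℤ × ℤ, x ∈ S → x.1 ∈ I := fun x hx => ⟨x.2, hx⟩
  have hJm : ∀ x : ℤ × ℤ, x ∈ S → x.2 ∈ J := fun x hx => ⟨x.1, hx⟩
  have hIfin : I.Finite := by
    refine Set.Finite.subset (hSfin.image Prod.fst) ?_
    rintro i ⟨j, hj⟩
    exact ⟨(i, j), hj, rfl⟩
  have hJfin : J.Finite := by
    refine Set.Finite.subset (hSfin.image Prod.snd) ?_
    rintro j ⟨i, hi⟩
    exact ⟨(i, j), hi, rfl⟩
  set C : Set (↥S → Fin 4) := {f | ∃ n : ℤ × ℤ, ∀ x : ↥S, f x = η ((x : ℤ × ℤ) + n)} with hCdef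
  have hPc : Pc η K = C.ncard := rfl
  set Ψ : (Option ↥J × (↥I → Bool)) → (↥S → Fin 4) := fun rw x =>
    enc4 (rw.2 ⟨(x : ℤ × ℤ).1, hIm _ x.2⟩)
      (decide (rw.1.map Subtype.val = some (x : ℤ × ℤ).2)) with hΨdef
  -- injectivity
  have hΨinj : Function.Injective Ψ := by
    rintro ⟨r, w⟩ ⟨r', w'⟩ h
    have hpt : ∀ x : ↥S, w ⟨(x : ℤ × ℤ).1, hIm _ x.2⟩ = w' ⟨(x : ℤ × ℤ).1, hIm _ x.2⟩ ∧
        ((r.map Subtype.val = some (x : ℤ × ℤ).2) ↔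
          (r'.map Subtype.val = some (x : ℤ × ℤ).2)) := by
      intro x
      have hx := congrFun h x
      obtain ⟨h1, h2⟩ := enc4_inj _ _ _ _ hx
      exact ⟨h1, decide_eq_decide.mp h2⟩
    have hw : w = w' := by
      funext i
      obtain ⟨i, hi⟩ := i
      obtain ⟨j, hj⟩ := hi
      exact (hpt ⟨(i, j), hj⟩).1
    have hr : r = r' := by
      have hsome : ∀ (j : ↥J) (s s' : Option ↥J),
          (∀ x : ↥S, (s.map Subtype.val = some (x : ℤ × ℤ).2) ↔
            (s'.map Subtype.val = some (x : ℤ × ℤ).2)) → s = some j → s' = some j := by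
        rintro ⟨j, hj⟩ s s' hiff rfl
        obtain ⟨i, hi⟩ := hj
        have hmp := (hiff ⟨(i, j), hi⟩).mp (by simp)
        match s', hmp with
        | some ⟨j', hj'⟩, h => simp only [Option.map_some, Option.some.injEq] at h; simp [h]
        | none, h => simp at h
      have hiff : ∀ x : ↥S, (r.map Subtype.val = some (x : ℤ × ℤ).2) ↔
          (r'.map Subtype.val = some (x : ℤ × ℤ).2) := fun x => (hpt x).2
      match r, r', hiff with
      | none, none, _ => rfl
      | some j, r', hiff => exact (hsome j _ r' hiff rfl).symm
      | none, some j, hiff => exact hsome j _ none (fun x => (hiff x).symm) rfl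
    rw [hw, hr]
  -- range Ψ = C
  have hCr : C = Set.range Ψ := by
    apply Set.Subset.antisymm
    · rintro f ⟨⟨a, b⟩, hf⟩
      refine ⟨⟨if h : -b ∈ J then some ⟨-b, h⟩ else none,
        fun i => decide (α ((i : ℤ) + a) = 1)⟩, ?_⟩
      funext x
      simp only [hΨdef]
      obtain ⟨x, hx⟩ := x
      rw [hf ⟨x, hx⟩]
      have hadd : x + (a, b) = (x.1 + a, x.2 + b) := rfl
      rw [hadd]
      by_cases hb0 : x.2 + b = 0
      · have hxJ : x.2 ∈ J := hJm _ hx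
        have hnb : -b = x.2 := by omega
        have hmark : ((if h : -b ∈ J then (some ⟨-b, h⟩ : Option ↥J) else none).map
            Subtype.val = some x.2) := by
          rw [dif_pos (hnb ▸ hxJ)]
          simp [hnb]
        rw [hb0, (hη (x.1 + a) 0).2, decide_eq_true hmark, enc4_eq _ (hα01 _)]
        simp
      · have hmark : ¬ ((if h : -b ∈ J then (some ⟨-b, h⟩ : Option ↥J) else none).map
            Subtype.val = some x.2) := by
          by_cases h : -b ∈ J
          · rw [dif_pos h]
            intro hc
            simp only [Option.map_some, Option.some.injEq] at hc
            omega
          · rw [dif_neg h]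
            simp
        rw [(hη (x.1 + a) (x.2 + b)).1 hb0, decide_eq_false hmark, enc4_eq _ (hα01 _)]
        simp
    · rintro f ⟨⟨r, w⟩, rfl⟩
      obtain ⟨b, hbrow⟩ : ∃ b : ℤ, ∀ x : ℤ × ℤ, x ∈ S →
          ((r.map Subtype.val = some x.2) ↔ x.2 + b = 0) := by
        match r with
        | none =>
          obtain ⟨z, hz⟩ := hJfin.infinite_compl.nonempty
          refine ⟨-z, fun x hx => ?_⟩
          constructor
          · intro h; simp at h
          · intro h
            have hxz : x.2 = z := by omega
            exact absurd (hJm _ hx) (by rw [hxz]; exact hz)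
        | some ⟨j, hj⟩ =>
          refine ⟨-j, fun x hx => ?_⟩
          constructor
          · intro h
            simp only [Option.map_some, Option.some.injEq] at h
            omega
          · intro h
            simp only [Option.map_some, Option.some.injEq]
            omega
      set lo : ℤ := -⌈R⌉ with hlo
      set L : ℕ := (⌈R⌉ - lo).toNat + 1 with hL
      set v : Fin L → Fin 4 := fun j =>
        if h : (lo + (j : ℕ)) ∈ I then (if w ⟨lo + (j : ℕ), h⟩ then 1 else 0) else 0 with hvdef
      have hv01 : ∀ j, v j = 0 ∨ v j = 1 := by
        intro j
        simp only [hvdef]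
        split
        · split
          · right; rfl
          · left; rfl
        · left; rfl
      obtain ⟨m, hm⟩ := words_all α hα01 hα L v hv01
      set a : ℤ := m - lo with ha
      have hword : ∀ i : ℤ, ∀ h : i ∈ I, α (i + a) = (if w ⟨i, h⟩ then 1 else 0) := by
        intro i hi
        obtain ⟨j, hj⟩ := id hi
        have hbd := hcoord (i, j) hj
        have hnn : 0 ≤ i - lo := by omega
        have hlt : (i - lo).toNat < L := by omega
        have hmm := hm ⟨(i - lo).toNat, hlt⟩
        simp only [hvdef, Fin.val_mk, Int.toNat_of_nonneg hnn,
          show lo + (i - lo) = i from by ring, show m + (i - lo) = i + a from by omega] at hmm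
        rw [dif_pos hi] at hmm
        rw [← hmm]
      refine ⟨(a, b), ?_⟩
      intro x
      simp only [hΨdef]
      obtain ⟨x, hx⟩ := x
      have hadd : x + (a, b) = (x.1 + a, x.2 + b) := rfl
      simp only [hadd]
      by_cases hb0 : x.2 + b = 0
      · have hmark : r.map Subtype.val = some x.2 := (hbrow x hx).mpr hb0
        rw [hb0, (hη (x.1 + a) 0).2, hword x.1 (hIm _ hx), decide_eq_true hmark, enc4_eq']
        simp
      · have hmark : ¬ (r.map Subtype.val = some x.2) := fun h => hb0 ((hbrow x hx).mp h)
        rw [(hη (x.1 + a) (x.2 + b)).1 hb0, hword x.1 (hIm _ hx), decide_eq_false hmark, enc4_eq']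
        simp
  -- count
  have hJsub := hJfin.to_subtype
  have hIsub := hIfin.to_subtype
  have hJft : Fintype ↥J := hJfin.fintype
  rw [hPc, hCr, ← Nat.card_coe_set_eq, Nat.card_range_of_injective hΨinj,
    Nat.card_prod, Nat.card_fun]
  rw [Nat.card_eq_fintype_card (α := Option ↥J), Fintype.card_option,
    ← Nat.card_eq_fintype_card (α := ↥J), Nat.card_coe_set_eq,
    Nat.card_coe_set_eq]
  simp [Nat.card_eq_fintype_card]
end

section
/- Let v be a unit vector and let S be a v-balanced set for η, and set h = |E_v(S)| − 1. Then the number of distinct η-colorings α of S such that the restriction α|_{S \ E_v(S)} extends in more than one way to an η-coloring of S is at most 2h. -/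
open Filter Set

/-- few colorings of a balanced set extend non-uniquely. -/
theorem stmt19 {A : Type*} [Fintype A] (η : ℤ × ℤ → A) (v : R2) (hv : ‖v‖ = 1)
    (S : Set (ℤ × ℤ)) (hS : IsBalanced η v S) :
    Set.ncard {f : S → A | (∃ n : ℤ × ℤ, ∀ x : S, f x = η ((x : ℤ × ℤ) + n)) ∧
        ∃ g g' : ℤ × ℤ → A, IsColoring η S g ∧ IsColoring η S g' ∧
          (∀ x : S, (x : ℤ × ℤ) ∉ edgeSet v S →
            g (x : ℤ × ℤ) = f x ∧ g' (x : ℤ × ℤ) = f x) ∧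
          ∃ x ∈ S, g x ≠ g' x} ≤
      2 * ((edgeSet v S).ncard - 1) := by
  classical
  obtain ⟨hfin, -, -, -, hcount, -⟩ := hS
  set E := edgeSet v S with hEdef
  have hEsub : E ⊆ S := fun x hx => hx.1
  have hEfin : E.Finite := hfin.subset hEsub
  have hEne : E.Nonempty := by
    by_contra h
    rw [Set.not_nonempty_iff_eq_empty] at h
    rw [h, Set.ncard_empty, Set.diff_empty, add_zero] at hcount
    exact lt_irrefl _ hcount
  have hE1 : 1 ≤ E.ncard := (Set.ncard_pos hEfin).mpr hEne
  haveI : Finite ↥S := hfin.to_subtype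
  haveI : Finite ↥(S \ E) := (hfin.subset Set.diff_subset).to_subtype
  haveI : Finite (↥S → A) := inferInstance
  haveI : Finite (↥(S \ E) → A) := inferInstance
  set CS : Set (↥S → A) := {f | ∃ n : ℤ × ℤ, ∀ x : ↥S, f x = η ((x : ℤ × ℤ) + n)}
    with hCSdef
  set CS' : Set (↥(S \ E) → A) :=
    {f | ∃ n : ℤ × ℤ, ∀ x : ↥(S \ E), f x = η ((x : ℤ × ℤ) + n)} with hCS'def
  set r : (↥S → A) → (↥(S \ E) → A) := fun f x => f ⟨x, x.2.1⟩ with hrdef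
  set C1 : Finset (↥S → A) := (Set.toFinite CS).toFinset with hC1
  set C2 : Finset (↥(S \ E) → A) := (Set.toFinite CS').toFinset with hC2
  have hmem1 : ∀ f, f ∈ C1 ↔ f ∈ CS := fun f => Set.Finite.mem_toFinset _
  have hmem2 : ∀ f, f ∈ C2 ↔ f ∈ CS' := fun f => Set.Finite.mem_toFinset _
  have hrmap : ∀ f ∈ C1, r f ∈ C2 := by
    intro f hf
    obtain ⟨n, hn⟩ := (hmem1 f).1 hf
    exact (hmem2 _).2 ⟨n, fun x => hn ⟨x, x.2.1⟩⟩
  have hsurj : ∀ d ∈ C2, ∃ f ∈ C1, r f = d := by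
    intro d hd
    obtain ⟨n, hn⟩ := (hmem2 d).1 hd
    refine ⟨fun x => η ((x : ℤ × ℤ) + n), (hmem1 _).2 ⟨n, fun _ => rfl⟩, ?_⟩
    funext x
    exact (hn x).symm
  set fib : (↥(S \ E) → A) → Finset (↥S → A) :=
    fun d => C1.filter (fun f => r f = d) with hfib
  set D : Finset (↥(S \ E) → A) := C2.filter (fun d => 2 ≤ (fib d).card) with hD
  set B : Finset (↥S → A) := C1.filter (fun f => 2 ≤ (fib (r f)).card) with hB
  have hsetB : {f : ↥S → A | (∃ n : ℤ × ℤ, ∀ x : ↥S, f x = η ((x : ℤ × ℤ) + n)) ∧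
      ∃ g g' : ℤ × ℤ → A, IsColoring η S g ∧ IsColoring η S g' ∧
        (∀ x : ↥S, (x : ℤ × ℤ) ∉ E →
          g (x : ℤ × ℤ) = f x ∧ g' (x : ℤ × ℤ) = f x) ∧
        ∃ x ∈ S, g x ≠ g' x} = (↑B : Set (↥S → A)) := by
    ext f
    simp only [Set.mem_setOf_eq, hB, Finset.coe_filter, Set.mem_setOf_eq]
    constructor
    · rintro ⟨hf, g, g', ⟨n1, hg⟩, ⟨n2, hg'⟩, hagree, x0, hx0, hne0⟩
      have hfC : f ∈ C1 := (hmem1 f).2 hf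
      refine ⟨hfC, ?_⟩
      set f1 : ↥S → A := fun x => g x with hf1
      set f2 : ↥S → A := fun x => g' x with hf2
      have hf1C : f1 ∈ C1 := (hmem1 _).2 ⟨n1, fun x => hg x x.2⟩
      have hf2C : f2 ∈ C1 := (hmem1 _).2 ⟨n2, fun x => hg' x x.2⟩
      have hr1 : r f1 = r f := by
        funext x
        exact (hagree ⟨x.1, x.2.1⟩ x.2.2).1
      have hr2 : r f2 = r f := by
        funext x
        exact (hagree ⟨x.1, x.2.1⟩ x.2.2).2
      have h12 : f1 ≠ f2 := fun h => hne0 (congrFun h ⟨x0, hx0⟩)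
      exact Finset.one_lt_card.2
        ⟨f1, Finset.mem_filter.2 ⟨hf1C, hr1⟩,
         f2, Finset.mem_filter.2 ⟨hf2C, hr2⟩, h12⟩
    · rintro ⟨hfC, hcard⟩
      have hf : f ∈ CS := (hmem1 f).1 hfC
      obtain ⟨n, hn⟩ := hf
      obtain ⟨f1, hm1, f2, hm2, h12⟩ := Finset.one_lt_card.1 hcard
      have hex : ∃ fd, fd ∈ fib (r f) ∧ fd ≠ f := by
        by_cases h : f1 = f
        · exact ⟨f2, hm2, fun h2 => h12 (h.trans h2.symm)⟩
        · exact ⟨f1, hm1, h⟩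
      obtain ⟨fd, hfd, hfdne⟩ := hex
      obtain ⟨hfdC, hfdr⟩ := Finset.mem_filter.1 hfd
      obtain ⟨n1, hn1⟩ := (hmem1 fd).1 hfdC
      refine ⟨⟨n, hn⟩, fun x => η (x + n1), fun x => η (x + n),
        ⟨n1, fun _ _ => rfl⟩, ⟨n, fun _ _ => rfl⟩, ?_, ?_⟩
      · intro x hx
        have hxx : fd x = f x := congrFun hfdr ⟨x.1, x.2, hx⟩
        refine ⟨?_, ?_⟩
        · show η ((x : ℤ × ℤ) + n1) = f x
          rw [← hn1 x]; exact hxx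
        · show η ((x : ℤ × ℤ) + n) = f x
          exact (hn x).symm
      · obtain ⟨x, hx⟩ := Function.ne_iff.1 hfdne
        refine ⟨x.1, x.2, ?_⟩
        show η ((x : ℤ × ℤ) + n1) ≠ η ((x : ℤ × ℤ) + n)
        rw [← hn1 x, ← hn x]
        exact hx
  rw [hsetB, Set.ncard_coe_finset]
  have hcc1 : colorCount η S = C1.card := by
    have h : colorCount η S = CS.ncard := rfl
    rw [h, hC1]
    exact Set.ncard_eq_toFinset_card CS (Set.toFinite CS)
  have hcc2 : colorCount η (S \ E) = C2.card := by
    have h : colorCount η (S \ E) = CS'.ncard := rfl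
    rw [h, hC2]
    exact Set.ncard_eq_toFinset_card CS' (Set.toFinite CS')
  have hkey1 : C1.card = ∑ d ∈ C2, (fib d).card :=
    Finset.card_eq_sum_card_fiberwise hrmap
  have hfib1 : ∀ d ∈ C2, 1 ≤ (fib d).card := by
    intro d hd
    obtain ⟨f, hf, hrf⟩ := hsurj d hd
    exact Finset.card_pos.2 ⟨f, Finset.mem_filter.2 ⟨hf, hrf⟩⟩
  have hDsub : D ⊆ C2 := Finset.filter_subset _ _
  have hkey2 : C2.card + ∑ d ∈ D, ((fib d).card - 1) ≤ C1.card := by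
    rw [hkey1]
    calc C2.card + ∑ d ∈ D, ((fib d).card - 1)
        ≤ C2.card + ∑ d ∈ C2, ((fib d).card - 1) := by
          exact Nat.add_le_add_left (Finset.sum_le_sum_of_subset hDsub) _
      _ = ∑ d ∈ C2, 1 + ∑ d ∈ C2, ((fib d).card - 1) := by
          rw [Finset.sum_const, smul_eq_mul, mul_one]
      _ = ∑ d ∈ C2, (1 + ((fib d).card - 1)) := (Finset.sum_add_distrib).symm
      _ = ∑ d ∈ C2, (fib d).card := by
          refine Finset.sum_congr rfl fun d hd => ?_
          have := hfib1 d hd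
          omega
  have hkey3 : D.card ≤ ∑ d ∈ D, ((fib d).card - 1) := by
    rw [Finset.card_eq_sum_ones]
    refine Finset.sum_le_sum fun d hd => ?_
    have := (Finset.mem_filter.1 hd).2
    omega
  have hkey4 : B.card = ∑ d ∈ D, (fib d).card := by
    have h1 : ∀ f ∈ B, r f ∈ D := by
      intro f hf
      obtain ⟨hfC, h2⟩ := Finset.mem_filter.1 hf
      exact Finset.mem_filter.2 ⟨hrmap f hfC, h2⟩
    rw [Finset.card_eq_sum_card_fiberwise h1]
    refine Finset.sum_congr rfl fun d hd => ?_
    congr 1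
    ext f
    simp only [hB, hfib, Finset.mem_filter]
    constructor
    · rintro ⟨⟨h1', h2⟩, h3⟩; exact ⟨h1', h3⟩
    · rintro ⟨h1', h3⟩
      refine ⟨⟨h1', ?_⟩, h3⟩
      rw [h3]
      exact (Finset.mem_filter.1 hd).2
  have hkey5 : ∑ d ∈ D, (fib d).card = D.card + ∑ d ∈ D, ((fib d).card - 1) := by
    rw [Finset.card_eq_sum_ones, ← Finset.sum_add_distrib]
    refine Finset.sum_congr rfl fun d hd => ?_
    have := (Finset.mem_filter.1 hd).2
    omega
  rw [hcc1, hcc2] at hcount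
  omega
end
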